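/- Let T > 0, let A : [0,T] → M_{2m}(ℝ) be smooth and B₁, …, B_k ∈ M_{2m}(ℝ) satisfy B_iB_j = 0 for all i, j. Let S solve Ṡ = A(t)S, S(0) = I_{2m}, define B_i^j(t) by the recursion B_i⁰(t) := B_i, B_i^j(t) := (d/dt)B_i^{j−1}(t) + B_i^{j−1}(t)A(t) − A(t)B_i^{j−1}(t), and fix P ∈ M_{2m}(ℝ). Define Φ(u) := 2·Σ_{i,j=1}^k ∫₀ᵀ ∫₀ᵗ u_i(t) u_j(s) tr[ Pᵀ S(T) S(t)⁻¹ B_i S(t) S(s)⁻¹ B_j S(s) ] ds dt, and for δ ∈ (0,T) define Q_δ(u) := 2·Σ_{i,j=1}^k ∫₀^δ ∫₀ᵗ u_i(t) u_j(s) 𝒫_{i,j}(t,s) ds dt, where 𝒫_{i,j}(t,s) := tr[ Pᵀ S(T) ( s·B_iB_j¹(0) + t·B_i¹(0)B_j + (s²/2)·B_iB_j²(0) + (t²/2)·B_i²(0)B_j + ts·B_i¹(0)B_j¹(0) ) ]. Then there exists C > 0 such that for every δ ∈ (0,T) and every u ∈ L²([0,T]; ℝᵏ) vanishing a.e. outside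 [0,δ], |Φ(u) − Q_δ(u)| ≤ C·δ⁴·‖u‖²_{L²}. -/

import Mathlib

open MeasureTheory Matrix

namespace Stmt7

/-- The space `M_{2m}(ℝ)`, with indices `Fin m ⊕ Fin m`. -/
abbrev Mat (m : ℕ) := Matrix (Fin m ⊕ Fin m) (Fin m ⊕ Fin m) ℝ

/-- `B⁰(t) := B`, `B^{j+1}(t) := (d/dt)B^j(t) + B^j(t)A(t) − A(t)B^j(t)`,
derivatives taken within `[0,T]`. -/
noncomputable def Bseq {m : ℕ} (T : ℝ) (A : ℝ → Mat m) (B : Mat m) : ℕ → ℝ → Mat m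
  | 0, _ => B
  | j + 1, t =>
      (Matrix.of fun a b => derivWithin (fun r => Bseq T A B j r a b) (Set.Icc 0 T) t)
        + (Bseq T A B j t * A t - A t * Bseq T A B j t)

/-- `Φ(u) = P · D²₀E^{I,T}(u)
  = 2 Σ_{i,j} ∫₀ᵀ∫₀ᵗ u_i(t)u_j(s) tr[Pᵀ S(T) S(t)⁻¹B_iS(t) S(s)⁻¹B_jS(s)] ds dt`. -/
noncomputable def Phi {m k : ℕ} (T : ℝ) (S : ℝ → Mat m) (B : Fin k → Mat m) (P : Mat m)
    (u : ℝ → Fin k → ℝ) : ℝ :=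
  2 * ∑ i, ∑ j, ∫ t in (0 : ℝ)..T, ∫ s in (0 : ℝ)..t,
    u t i * u s j *
      Matrix.trace (Pᵀ * (S T * ((S t)⁻¹ * B i * S t * ((S s)⁻¹ * B j * S s))))

/-- `𝒫_{i,j}(t,s) = tr[Pᵀ S(T)(sB_iB_j¹(0) + tB_i¹(0)B_j + (s²/2)B_iB_j²(0)
  + (t²/2)B_i²(0)B_j + ts B_i¹(0)B_j¹(0))]`. -/
noncomputable def Pcal {m k : ℕ} (T : ℝ) (A : ℝ → Mat m) (S : ℝ → Mat m)
    (B : Fin k → Mat m) (P : Mat m) (i j : Fin k) (t s : ℝ) : ℝ :=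
  Matrix.trace (Pᵀ * (S T *
    (s • (B i * Bseq T A (B j) 1 0) + t • (Bseq T A (B i) 1 0 * B j)
      + (s ^ 2 / 2) • (B i * Bseq T A (B j) 2 0)
      + (t ^ 2 / 2) • (Bseq T A (B i) 2 0 * B j)
      + (t * s) • (Bseq T A (B i) 1 0 * Bseq T A (B j) 1 0))))

/-- `Q_δ(u) = 2 Σ_{i,j} ∫₀^δ∫₀ᵗ u_i(t)u_j(s) 𝒫_{i,j}(t,s) ds dt`. -/
noncomputable def Qdelta {m k : ℕ} (T : ℝ) (A : ℝ → Mat m) (S : ℝ → Mat m)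
    (B : Fin k → Mat m) (P : Mat m) (δ : ℝ) (u : ℝ → Fin k → ℝ) : ℝ :=
  2 * ∑ i, ∑ j, ∫ t in (0 : ℝ)..δ, ∫ s in (0 : ℝ)..t,
    u t i * u s j * Pcal T A S B P i j t s

/-- Entrywise ℓ¹ "norm" on matrices. -/
noncomputable def nrm {m : ℕ} (X : Mat m) : ℝ := ∑ a, ∑ b, |X a b|

variable {m : ℕ}

lemma nrm_nonneg (X : Mat m) : 0 ≤ nrm X :=
  Finset.sum_nonneg fun _ _ => Finset.sum_nonneg fun _ _ => abs_nonneg _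

lemma abs_entry_le_nrm (X : Mat m) (a b : Fin m ⊕ Fin m) : |X a b| ≤ nrm X := by
  refine le_trans ?_ (Finset.single_le_sum (f := fun a' => ∑ b', |X a' b'|)
    (fun _ _ => Finset.sum_nonneg fun _ _ => abs_nonneg _) (Finset.mem_univ a))
  exact Finset.single_le_sum (f := fun b' => |X a b'|) (fun _ _ => abs_nonneg _)
    (Finset.mem_univ b)

lemma nrm_mul_le (X Y : Mat m) : nrm (X * Y) ≤ nrm X * nrm Y := by
  have h1 : nrm (X * Y) ≤ ∑ c, (∑ a, |X a c|) * (∑ b, |Y c b|) := by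
    calc nrm (X * Y) ≤ ∑ a, ∑ b, ∑ c, |X a c| * |Y c b| := by
          refine Finset.sum_le_sum fun a _ => Finset.sum_le_sum fun b _ => ?_
          rw [Matrix.mul_apply]
          exact (Finset.abs_sum_le_sum_abs _ _).trans
            (Finset.sum_le_sum fun c _ => (abs_mul _ _).le)
      _ = ∑ a, ∑ c, ∑ b, |X a c| * |Y c b| :=
          Finset.sum_congr rfl fun a _ => Finset.sum_comm
      _ = ∑ c, ∑ a, ∑ b, |X a c| * |Y c b| := Finset.sum_comm
      _ = ∑ c, (∑ a, |X a c|) * (∑ b, |Y c b|) := by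
          refine Finset.sum_congr rfl fun c _ => ?_
          rw [Finset.sum_mul]
          exact Finset.sum_congr rfl fun a _ => (Finset.mul_sum _ _ _).symm
  refine h1.trans ?_
  calc ∑ c, (∑ a, |X a c|) * (∑ b, |Y c b|)
      ≤ ∑ c, (∑ a, |X a c|) * nrm Y := by
        refine Finset.sum_le_sum fun c _ => ?_
        refine mul_le_mul_of_nonneg_left ?_ (Finset.sum_nonneg fun _ _ => abs_nonneg _)
        exact Finset.single_le_sum (f := fun c' => ∑ b, |Y c' b|)
          (fun _ _ => Finset.sum_nonneg fun _ _ => abs_nonneg _) (Finset.mem_univ c)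
    _ = (∑ c, ∑ a, |X a c|) * nrm Y := (Finset.sum_mul _ _ _).symm
    _ = nrm X * nrm Y := by rw [Finset.sum_comm]; rfl

lemma nrm_add_le (X Y : Mat m) : nrm (X + Y) ≤ nrm X + nrm Y := by
  unfold nrm
  rw [← Finset.sum_add_distrib]
  refine Finset.sum_le_sum fun a _ => ?_
  rw [← Finset.sum_add_distrib]
  exact Finset.sum_le_sum fun b _ => abs_add_le _ _

lemma nrm_smul (r : ℝ) (X : Mat m) : nrm (r • X) = |r| * nrm X := by
  unfold nrm
  simp only [Matrix.smul_apply, smul_eq_mul, abs_mul, ← Finset.mul_sum]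

lemma abs_trace_mul_le (W X : Mat m) : |Matrix.trace (W * X)| ≤ nrm W * nrm X := by
  calc |Matrix.trace (W * X)| ≤ ∑ a, ∑ c, |W a c| * |X c a| := by
        simp only [Matrix.trace, Matrix.diag]
        refine (Finset.abs_sum_le_sum_abs _ _).trans (Finset.sum_le_sum fun a _ => ?_)
        rw [Matrix.mul_apply]
        exact (Finset.abs_sum_le_sum_abs _ _).trans
          (Finset.sum_le_sum fun c _ => (abs_mul _ _).le)
    _ ≤ ∑ a, ∑ c, |W a c| * nrm X := by
        refine Finset.sum_le_sum fun a _ => Finset.sum_le_sum fun c _ =>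
          mul_le_mul_of_nonneg_left (abs_entry_le_nrm _ _ _) (abs_nonneg _)
    _ = nrm W * nrm X := by simp only [← Finset.sum_mul]; rfl

lemma contDiffOn_finset_prod {ι : Type*} {n : WithTop ℕ∞} {s : Set ℝ}
    (f : ι → ℝ → ℝ) (t : Finset ι) (hf : ∀ a ∈ t, ContDiffOn ℝ n (f a) s) :
    ContDiffOn ℝ n (fun x => ∏ a ∈ t, f a x) s := by
  classical
  induction t using Finset.induction with
  | empty => simpa using contDiffOn_const
  | insert _ _ h ih =>
      simp only [Finset.prod_insert h]
      exact (hf _ (Finset.mem_insert_self _ _)).mul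
        (ih fun a ha => hf a (Finset.mem_insert_of_mem ha))

lemma contDiffOn_det {ι : Type*} [Fintype ι] [DecidableEq ι] {n : WithTop ℕ∞} {s : Set ℝ}
    (g : ℝ → Matrix ι ι ℝ) (hg : ∀ a b, ContDiffOn ℝ n (fun t => g t a b) s) :
    ContDiffOn ℝ n (fun t => (g t).det) s := by
  simp only [Matrix.det_apply]
  apply ContDiffOn.sum
  intro σ _
  have h := (contDiffOn_finset_prod (fun i t => g t (σ i) i) Finset.univ
    fun a _ => hg _ _).const_smul (((Equiv.Perm.sign σ : ℤ) : ℝ))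
  exact h.congr fun x hx => by simp [Units.smul_def, zsmul_eq_mul, smul_eq_mul]


section Main

variable {m : ℕ} {T : ℝ} {A : ℝ → Mat m} {S : ℝ → Mat m}

lemma S_contDiffOn (hT : 0 < T)
    (hA : ∀ a b, ContDiffOn ℝ (⊤ : ℕ∞) (fun t => A t a b) (Set.Icc 0 T))
    (hS : ∀ t ∈ Set.Icc (0 : ℝ) T, ∀ a b,
      HasDerivWithinAt (fun r => S r a b) ((A t * S t) a b) (Set.Icc 0 T) t) :
    ∀ (n : ℕ) a b, ContDiffOn ℝ n (fun t => S t a b) (Set.Icc 0 T) := by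
  intro n
  induction n with
  | zero =>
      intro a b
      simp only [Nat.cast_zero, contDiffOn_zero]
      exact fun t ht => (hS t ht a b).continuousWithinAt
  | succ n ih =>
      intro a b
      rw [show ((n + 1 : ℕ) : WithTop ℕ∞) = (n : WithTop ℕ∞) + 1 from by exact_mod_cast rfl]
      rw [contDiffOn_succ_iff_derivWithin (uniqueDiffOn_Icc hT)]
      refine ⟨fun t ht => (hS t ht a b).differentiableWithinAt, ?_, ?_⟩
      · intro h; exact absurd h (by simp)
      · refine ContDiffOn.congr ?_
          (fun t ht => (hS t ht a b).derivWithin (uniqueDiffOn_Icc hT t ht))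
        refine ContDiffOn.congr ?_ (fun t _ => Matrix.mul_apply (M := A t) (N := S t))
        exact ContDiffOn.sum fun c _ =>
          ((hA a c).of_le (by exact_mod_cast le_top)).mul (ih c b)

lemma S_det_isUnit (hT : 0 < T)
    (hA : ∀ a b, ContDiffOn ℝ (⊤ : ℕ∞) (fun t => A t a b) (Set.Icc 0 T))
    (hS0 : S 0 = 1)
    (hS : ∀ t ∈ Set.Icc (0 : ℝ) T, ∀ a b,
      HasDerivWithinAt (fun r => S r a b) ((A t * S t) a b) (Set.Icc 0 T) t) :
    ∀ t ∈ Set.Icc (0 : ℝ) T, IsUnit (S t).det := by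
  intro t₀ ht₀
  rw [isUnit_iff_ne_zero]
  intro hdet
  obtain ⟨v, hv0, hvS⟩ := (Matrix.exists_mulVec_eq_zero_iff).2 hdet
  -- uniform bound on `nrm (A t)` over `[0, T]`
  obtain ⟨κ, hκ⟩ : ∃ κ, ∀ t ∈ Set.Icc (0:ℝ) T, ‖nrm (A t)‖ ≤ κ := by
    refine IsCompact.exists_bound_of_continuousOn isCompact_Icc ?_
    refine continuousOn_finset_sum _ fun a _ => continuousOn_finset_sum _ fun b _ => ?_
    exact ((hA a b).continuousOn).abs
  set κ' : ℝ := max κ 0 with hκ'def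
  have hκ'0 : 0 ≤ κ' := le_max_right _ _
  have hκ' : ∀ t ∈ Set.Icc (0:ℝ) T, nrm (A t) ≤ κ' := fun t ht =>
    le_trans (le_trans (le_abs_self _) (hκ t ht)) (le_max_left _ _)
  -- the clamped time
  set τ : ℝ → ℝ := fun t => max 0 (min t T) with hτdef
  have hτmem : ∀ t, τ t ∈ Set.Icc (0:ℝ) T := fun t =>
    ⟨le_max_left _ _, max_le (le_of_lt hT) (min_le_right _ _)⟩
  have hτeq : ∀ t ∈ Set.Icc (0:ℝ) T, τ t = t := by
    intro t ht
    simp only [hτdef]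
    rw [min_eq_left ht.2, max_eq_right ht.1]
  -- the (clamped) vector field
  set vf : ℝ → ((Fin m ⊕ Fin m) → ℝ) → ((Fin m ⊕ Fin m) → ℝ) :=
    fun t x => (A (τ t)) *ᵥ x with hvf
  have hlip : ∀ t, LipschitzOnWith κ'.toNNReal (vf t) Set.univ := by
    intro t
    refine LipschitzOnWith.of_dist_le_mul fun x _ y _ => ?_
    rw [dist_eq_norm, dist_eq_norm, hvf]
    have : A (τ t) *ᵥ x - A (τ t) *ᵥ y = A (τ t) *ᵥ (x - y) := (Matrix.mulVec_sub _ _ _).symm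
    rw [this, Real.coe_toNNReal _ hκ'0]
    refine pi_norm_le_iff_of_nonneg (by positivity) |>.2 fun a => ?_
    calc ‖(A (τ t) *ᵥ (x - y)) a‖ = |∑ b, A (τ t) a b * (x - y) b| := rfl
      _ ≤ ∑ b, |A (τ t) a b| * |(x - y) b| := by
          refine (Finset.abs_sum_le_sum_abs _ _).trans
            (Finset.sum_le_sum fun b _ => (abs_mul _ _).le)
      _ ≤ ∑ b, |A (τ t) a b| * ‖x - y‖ := by
          refine Finset.sum_le_sum fun b _ =>
            mul_le_mul_of_nonneg_left (norm_le_pi_norm (x - y) b) (abs_nonneg _)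
      _ = (∑ b, |A (τ t) a b|) * ‖x - y‖ := (Finset.sum_mul _ _ _).symm
      _ ≤ κ' * ‖x - y‖ := by
          refine mul_le_mul_of_nonneg_right ?_ (norm_nonneg _)
          refine le_trans ?_ (hκ' _ (hτmem t))
          exact Finset.single_le_sum
            (f := fun a' => ∑ b, |A (τ t) a' b|)
            (fun _ _ => Finset.sum_nonneg fun _ _ => abs_nonneg _) (Finset.mem_univ a)
  -- the solution through `v`
  set y : ℝ → ((Fin m ⊕ Fin m) → ℝ) := fun t => S t *ᵥ v with hy
  have hycont : ContinuousOn y (Set.Icc 0 t₀) := by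
    refine ContinuousOn.mono ?_ (Set.Icc_subset_Icc_right ht₀.2)
    refine continuousOn_pi.2 fun a => ?_
    show ContinuousOn (fun t => ∑ b, S t a b * v b) (Set.Icc 0 T)
    refine continuousOn_finset_sum _ fun b _ => ContinuousOn.mul ?_ continuousOn_const
    exact fun t ht => (hS t ht a b).continuousWithinAt
  have hyderiv : ∀ t ∈ Set.Ioc (0:ℝ) t₀, HasDerivWithinAt y (vf t (y t)) (Set.Iic t) t := by
    intro t ht
    have htIcc : t ∈ Set.Icc (0:ℝ) T := ⟨ht.1.le, ht.2.trans ht₀.2⟩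
    have h1 : HasDerivWithinAt y (A t *ᵥ y t) (Set.Icc 0 T) t := by
      rw [hasDerivWithinAt_pi]
      intro a
      have : (A t *ᵥ y t) a = ∑ b, (A t * S t) a b * v b := by
        rw [hy]; simp only [Matrix.mulVec_mulVec]
        rfl
      rw [this]
      show HasDerivWithinAt (fun x => ∑ b, S x a b * v b) _ _ _
      exact HasDerivWithinAt.fun_sum fun b _ => (hS t htIcc a b).mul_const (v b)
    have h2 : vf t (y t) = A t *ᵥ y t := by
      show A (τ t) *ᵥ y t = A t *ᵥ y t
      rw [hτeq t htIcc]
    rw [h2]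
    refine h1.mono_of_mem_nhdsWithin ?_
    refine mem_nhdsWithin.2 ⟨Set.Ioi 0, isOpen_Ioi, ht.1, fun x hx => ?_⟩
    exact ⟨le_of_lt hx.1, hx.2.trans (ht.2.trans ht₀.2)⟩
  have hg' : ∀ t ∈ Set.Ioc (0:ℝ) t₀, HasDerivWithinAt
      (fun _ : ℝ => (0 : (Fin m ⊕ Fin m) → ℝ)) (vf t 0) (Set.Iic t) t := by
    intro t _
    have : vf t 0 = 0 := by
      show A (τ t) *ᵥ 0 = 0
      exact Matrix.mulVec_zero _
    rw [this]
    exact hasDerivWithinAt_const t (Set.Iic t) (0 : (Fin m ⊕ Fin m) → ℝ)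
  have huniq := ODE_solution_unique_of_mem_Icc_left (f := y)
    (g := fun _ : ℝ => (0 : (Fin m ⊕ Fin m) → ℝ)) (fun t _ => hlip t) hycont hyderiv
    (fun _ _ => Set.mem_univ _) continuousOn_const hg'
    (fun _ _ => Set.mem_univ _) (by simpa [hy] using hvS)
  have h0 : y 0 = 0 := huniq (Set.left_mem_Icc.2 ht₀.1)
  rw [hy] at h0
  simp only [hS0, Matrix.one_mulVec] at h0
  exact hv0 h0


lemma Sinv_contDiffOn (hT : 0 < T)
    (hA : ∀ a b, ContDiffOn ℝ (⊤ : ℕ∞) (fun t => A t a b) (Set.Icc 0 T))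
    (hS0 : S 0 = 1)
    (hS : ∀ t ∈ Set.Icc (0 : ℝ) T, ∀ a b,
      HasDerivWithinAt (fun r => S r a b) ((A t * S t) a b) (Set.Icc 0 T) t) :
    ∀ (n : ℕ) a b, ContDiffOn ℝ n (fun t => (S t)⁻¹ a b) (Set.Icc 0 T) := by
  intro n a b
  have hdet : ContDiffOn ℝ n (fun t => (S t).det) (Set.Icc 0 T) :=
    contDiffOn_det S (fun a b => S_contDiffOn hT hA hS n a b)
  have hdetne : ∀ t ∈ Set.Icc (0:ℝ) T, (S t).det ≠ 0 := fun t ht =>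
    isUnit_iff_ne_zero.1 (S_det_isUnit hT hA hS0 hS t ht)
  have hadj : ContDiffOn ℝ n (fun t => (S t).adjugate a b) (Set.Icc 0 T) := by
    refine ContDiffOn.congr
      (contDiffOn_det (fun t => (S t).updateRow b (Pi.single a 1)) ?_)
      (fun t _ => Matrix.adjugate_apply _ _ _)
    intro c d
    by_cases hcb : c = b
    · have heq : (fun t => (S t).updateRow b (Pi.single a 1) c d)
          = fun _ => (Pi.single a 1 : (Fin m ⊕ Fin m) → ℝ) d := by
        funext t; simp [Matrix.updateRow_apply, hcb]
      rw [heq]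
      exact contDiffOn_const
    · refine ContDiffOn.congr (S_contDiffOn hT hA hS n c d) (fun t _ => ?_)
      simp [Matrix.updateRow_apply, hcb]
  refine ContDiffOn.congr ((hdet.inv hdetne).mul hadj) (fun t ht => ?_)
  rw [Matrix.inv_def]
  simp [Ring.inverse_eq_inv', Matrix.smul_apply, smul_eq_mul]

lemma Sinv_hasDeriv (hT : 0 < T)
    (hA : ∀ a b, ContDiffOn ℝ (⊤ : ℕ∞) (fun t => A t a b) (Set.Icc 0 T))
    (hS0 : S 0 = 1)
    (hS : ∀ t ∈ Set.Icc (0 : ℝ) T, ∀ a b,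
      HasDerivWithinAt (fun r => S r a b) ((A t * S t) a b) (Set.Icc 0 T) t) :
    ∀ t ∈ Set.Icc (0 : ℝ) T, ∀ a b,
      HasDerivWithinAt (fun r => (S r)⁻¹ a b) ((-((S t)⁻¹ * A t)) a b) (Set.Icc 0 T) t := by
  intro t ht
  have hu : UniqueDiffWithinAt ℝ (Set.Icc (0:ℝ) T) t := uniqueDiffOn_Icc hT t ht
  have hdiff : ∀ a b, DifferentiableWithinAt ℝ (fun r => (S r)⁻¹ a b) (Set.Icc 0 T) t := by
    intro a b
    exact ((Sinv_contDiffOn hT hA hS0 hS 1 a b).differentiableOn (by norm_num)) t ht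
  set D : Mat m := Matrix.of fun a b =>
    derivWithin (fun r => (S r)⁻¹ a b) (Set.Icc 0 T) t with hDdef
  have hD : ∀ a b, HasDerivWithinAt (fun r => (S r)⁻¹ a b) (D a b) (Set.Icc 0 T) t :=
    fun a b => (hdiff a b).hasDerivWithinAt
  have key : D * S t + (S t)⁻¹ * (A t * S t) = 0 := by
    ext a b
    have hF : HasDerivWithinAt (fun r => ∑ c, (S r)⁻¹ a c * S r c b)
        (∑ c, (D a c * S t c b + (S t)⁻¹ a c * (A t * S t) c b)) (Set.Icc 0 T) t :=
      HasDerivWithinAt.fun_sum fun c _ => (hD a c).mul (hS t ht c b)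
    have hconst : HasDerivWithinAt (fun r => ∑ c, (S r)⁻¹ a c * S r c b)
        (0 : ℝ) (Set.Icc 0 T) t := by
      refine (hasDerivWithinAt_const t (Set.Icc 0 T) ((1 : Mat m) a b)).congr ?_ ?_
      · intro r hr
        rw [← Matrix.mul_apply, Matrix.nonsing_inv_mul _ (S_det_isUnit hT hA hS0 hS r hr)]
      · rw [← Matrix.mul_apply, Matrix.nonsing_inv_mul _ (S_det_isUnit hT hA hS0 hS t ht)]
    have := (hF.derivWithin hu).symm.trans (hconst.derivWithin hu)
    simpa [Matrix.add_apply, Matrix.mul_apply, Finset.sum_add_distrib] using this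
  have hDeq : D = -((S t)⁻¹ * A t) := by
    have h1 : D * S t = -((S t)⁻¹ * A t) * S t := by
      have := eq_neg_of_add_eq_zero_left key
      rw [this]
      noncomm_ring
    calc D = D * S t * (S t)⁻¹ :=
          (Matrix.mul_nonsing_inv_cancel_right _ _ (S_det_isUnit hT hA hS0 hS t ht)).symm
      _ = -((S t)⁻¹ * A t) * S t * (S t)⁻¹ := by rw [h1]
      _ = -((S t)⁻¹ * A t) :=
          Matrix.mul_nonsing_inv_cancel_right _ _ (S_det_isUnit hT hA hS0 hS t ht)
  intro a b
  have := hD a b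
  rwa [hDeq] at this

lemma triple_hasDeriv (hT : 0 < T)
    (hA : ∀ a b, ContDiffOn ℝ (⊤ : ℕ∞) (fun t => A t a b) (Set.Icc 0 T))
    (hS0 : S 0 = 1)
    (hS : ∀ t ∈ Set.Icc (0 : ℝ) T, ∀ a b,
      HasDerivWithinAt (fun r => S r a b) ((A t * S t) a b) (Set.Icc 0 T) t)
    (C : ℝ → Mat m) (C' : Mat m) (t : ℝ) (ht : t ∈ Set.Icc (0:ℝ) T)
    (hC : ∀ a b, HasDerivWithinAt (fun r => C r a b) (C' a b) (Set.Icc 0 T) t) :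
    ∀ a b, HasDerivWithinAt (fun r => ((S r)⁻¹ * C r * S r) a b)
      (((S t)⁻¹ * (C' + C t * A t - A t * C t) * S t) a b) (Set.Icc 0 T) t := by
  intro a b
  have expand : ∀ r, ((S r)⁻¹ * C r * S r) a b
      = ∑ d, (∑ c, (S r)⁻¹ a c * C r c d) * S r d b := by
    intro r
    rw [Matrix.mul_apply]
    exact Finset.sum_congr rfl fun d _ => by rw [Matrix.mul_apply]
  have step : HasDerivWithinAt (fun r => ∑ d, (∑ c, (S r)⁻¹ a c * C r c d) * S r d b)
      (∑ d, ((∑ c, ((-((S t)⁻¹ * A t)) a c * C t c d + (S t)⁻¹ a c * C' c d)) * S t d b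
        + (∑ c, (S t)⁻¹ a c * C t c d) * (A t * S t) d b)) (Set.Icc 0 T) t := by
    refine HasDerivWithinAt.fun_sum fun d _ => ?_
    refine HasDerivWithinAt.mul ?_ (hS t ht d b)
    exact HasDerivWithinAt.fun_sum fun c _ =>
      (Sinv_hasDeriv hT hA hS0 hS t ht a c).mul (hC c d)
  have hval : ((S t)⁻¹ * (C' + C t * A t - A t * C t) * S t) a b
      = ∑ d, ((∑ c, ((-((S t)⁻¹ * A t)) a c * C t c d + (S t)⁻¹ a c * C' c d)) * S t d b
        + (∑ c, (S t)⁻¹ a c * C t c d) * (A t * S t) d b) := by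
    set Y : Mat m := (-((S t)⁻¹ * A t)) * C t + (S t)⁻¹ * C' with hY
    set Z : Mat m := (S t)⁻¹ * C t with hZ
    have hmat : (S t)⁻¹ * (C' + C t * A t - A t * C t) * S t
        = Y * S t + Z * (A t * S t) := by
      rw [hY, hZ]; noncomm_ring
    rw [hmat, Matrix.add_apply, Matrix.mul_apply, Matrix.mul_apply,
      ← Finset.sum_add_distrib]
    refine Finset.sum_congr rfl fun d _ => ?_
    have h1 : Y a d = ∑ c, ((-((S t)⁻¹ * A t)) a c * C t c d + (S t)⁻¹ a c * C' c d) := by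
      rw [hY, Matrix.add_apply, Matrix.mul_apply, Matrix.mul_apply,
        ← Finset.sum_add_distrib]
    have h2 : Z a d = ∑ c, (S t)⁻¹ a c * C t c d := by rw [hZ, Matrix.mul_apply]
    rw [h1, h2]
  rw [show (fun r => ((S r)⁻¹ * C r * S r) a b)
      = fun r => ∑ d, (∑ c, (S r)⁻¹ a c * C r c d) * S r d b from funext expand, hval]
  exact step


lemma Bseq_contDiffOn (hT : 0 < T)
    (hA : ∀ a b, ContDiffOn ℝ (⊤ : ℕ∞) (fun t => A t a b) (Set.Icc 0 T))
    (Bi : Mat m) :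
    ∀ (j n : ℕ) a b, ContDiffOn ℝ n (fun t => Bseq T A Bi j t a b) (Set.Icc 0 T) := by
  intro j
  induction j with
  | zero => intro n a b; exact contDiffOn_const
  | succ j ih =>
      intro n a b
      have hexp : (fun t => Bseq T A Bi (j+1) t a b)
          = fun t => derivWithin (fun r => Bseq T A Bi j r a b) (Set.Icc 0 T) t
            + ((Bseq T A Bi j t * A t) a b - (A t * Bseq T A Bi j t) a b) := by
        funext t
        simp [Bseq, Matrix.add_apply, Matrix.sub_apply]
      rw [hexp]
      refine ContDiffOn.add ?_ (ContDiffOn.sub ?_ ?_)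
      · refine (ih (n+1) a b).derivWithin (uniqueDiffOn_Icc hT) ?_
        exact_mod_cast le_refl ((n:WithTop ℕ∞) + 1)
      · refine ContDiffOn.congr ?_ (fun t _ => Matrix.mul_apply)
        exact ContDiffOn.sum fun c _ =>
          (ih n a c).mul ((hA c b).of_le (by exact_mod_cast le_top))
      · refine ContDiffOn.congr ?_ (fun t _ => Matrix.mul_apply)
        exact ContDiffOn.sum fun c _ =>
          ((hA a c).of_le (by exact_mod_cast le_top)).mul (ih n c b)

lemma Bseq_hasDeriv (hT : 0 < T)
    (hA : ∀ a b, ContDiffOn ℝ (⊤ : ℕ∞) (fun t => A t a b) (Set.Icc 0 T))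
    (Bi : Mat m) (j : ℕ) (t : ℝ) (ht : t ∈ Set.Icc (0:ℝ) T) :
    ∀ a b, HasDerivWithinAt (fun r => Bseq T A Bi j r a b)
      ((Bseq T A Bi (j+1) t - (Bseq T A Bi j t * A t - A t * Bseq T A Bi j t)) a b)
      (Set.Icc 0 T) t := by
  intro a b
  have hdiff : DifferentiableWithinAt ℝ (fun r => Bseq T A Bi j r a b) (Set.Icc 0 T) t :=
    ((Bseq_contDiffOn hT hA Bi j 1 a b).differentiableOn (by norm_num)) t ht
  have hval : (Bseq T A Bi (j+1) t - (Bseq T A Bi j t * A t - A t * Bseq T A Bi j t)) a b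
      = derivWithin (fun r => Bseq T A Bi j r a b) (Set.Icc 0 T) t := by
    simp [Bseq, Matrix.sub_apply, Matrix.add_apply]
  rw [hval]
  exact hdiff.hasDerivWithinAt

lemma Nseq_hasDeriv (hT : 0 < T)
    (hA : ∀ a b, ContDiffOn ℝ (⊤ : ℕ∞) (fun t => A t a b) (Set.Icc 0 T))
    (hS0 : S 0 = 1)
    (hS : ∀ t ∈ Set.Icc (0 : ℝ) T, ∀ a b,
      HasDerivWithinAt (fun r => S r a b) ((A t * S t) a b) (Set.Icc 0 T) t)
    (Bi : Mat m) (j : ℕ) (t : ℝ) (ht : t ∈ Set.Icc (0:ℝ) T) :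
    ∀ a b, HasDerivWithinAt (fun r => ((S r)⁻¹ * Bseq T A Bi j r * S r) a b)
      (((S t)⁻¹ * Bseq T A Bi (j+1) t * S t) a b) (Set.Icc 0 T) t := by
  intro a b
  have h := triple_hasDeriv hT hA hS0 hS (fun r => Bseq T A Bi j r)
    (Bseq T A Bi (j+1) t - (Bseq T A Bi j t * A t - A t * Bseq T A Bi j t)) t ht
    (Bseq_hasDeriv hT hA Bi j t ht) a b
  have hco : Bseq T A Bi (j+1) t - (Bseq T A Bi j t * A t - A t * Bseq T A Bi j t)
      + Bseq T A Bi j t * A t - A t * Bseq T A Bi j t = Bseq T A Bi (j+1) t := by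
    noncomm_ring
  rw [show (Bseq T A Bi (j+1) t - (Bseq T A Bi j t * A t - A t * Bseq T A Bi j t))
      + Bseq T A Bi j t * A t - A t * Bseq T A Bi j t = Bseq T A Bi (j+1) t from hco] at h
  exact h

lemma iteratedDeriv_N (hT : 0 < T)
    (hA : ∀ a b, ContDiffOn ℝ (⊤ : ℕ∞) (fun t => A t a b) (Set.Icc 0 T))
    (hS0 : S 0 = 1)
    (hS : ∀ t ∈ Set.Icc (0 : ℝ) T, ∀ a b,
      HasDerivWithinAt (fun r => S r a b) ((A t * S t) a b) (Set.Icc 0 T) t)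
    (Bi : Mat m) (a b : Fin m ⊕ Fin m) :
    ∀ (j : ℕ), ∀ t ∈ Set.Icc (0:ℝ) T,
      iteratedDerivWithin j (fun r => ((S r)⁻¹ * Bi * S r) a b) (Set.Icc 0 T) t
        = ((S t)⁻¹ * Bseq T A Bi j t * S t) a b := by
  intro j
  induction j with
  | zero =>
      intro t ht
      rw [iteratedDerivWithin_zero]
      rfl
  | succ j ih =>
      intro t ht
      rw [iteratedDerivWithin_succ]
      have hcongr : derivWithin
          (iteratedDerivWithin j (fun r => ((S r)⁻¹ * Bi * S r) a b) (Set.Icc 0 T))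
          (Set.Icc 0 T) t
          = derivWithin (fun r => ((S r)⁻¹ * Bseq T A Bi j r * S r) a b) (Set.Icc 0 T) t := by
        refine derivWithin_congr (fun y hy => ih y hy) (ih t ht)
      rw [hcongr]
      exact (Nseq_hasDeriv hT hA hS0 hS Bi j t ht a b).derivWithin (uniqueDiffOn_Icc hT t ht)

lemma taylor_entry (hT : 0 < T)
    (hA : ∀ a b, ContDiffOn ℝ (⊤ : ℕ∞) (fun t => A t a b) (Set.Icc 0 T))
    (hS0 : S 0 = 1)
    (hS : ∀ t ∈ Set.Icc (0 : ℝ) T, ∀ a b,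
      HasDerivWithinAt (fun r => S r a b) ((A t * S t) a b) (Set.Icc 0 T) t)
    (Bi : Mat m) (a b : Fin m ⊕ Fin m) :
    ∃ K : ℝ, ∀ x ∈ Set.Icc (0:ℝ) T,
      |((S x)⁻¹ * Bi * S x) a b - (Bi a b + x * (Bseq T A Bi 1 0) a b
        + x^2/2 * (Bseq T A Bi 2 0) a b)| ≤ K * x^3 := by
  have hcd : ContDiffOn ℝ ((2:ℕ) + 1) (fun x => ((S x)⁻¹ * Bi * S x) a b) (Set.Icc 0 T) := by
    have hexp : (fun x => ((S x)⁻¹ * Bi * S x) a b)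
        = fun t => ∑ d, (∑ c, (S t)⁻¹ a c * Bi c d) * S t d b := by
      funext t
      rw [Matrix.mul_apply]
      exact Finset.sum_congr rfl fun d _ => by rw [Matrix.mul_apply]
    rw [hexp]
    refine ContDiffOn.sum fun d _ => ContDiffOn.mul ?_ (S_contDiffOn hT hA hS 3 d b)
    exact ContDiffOn.sum fun c _ =>
      (Sinv_contDiffOn hT hA hS0 hS 3 a c).mul contDiffOn_const
  obtain ⟨K, hK⟩ := exists_taylor_mean_remainder_bound (le_of_lt hT) hcd
  refine ⟨K, fun x hx => ?_⟩
  have h := hK x hx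
  rw [taylor_within_apply] at h
  have hiter : ∀ j : ℕ, iteratedDerivWithin j (fun x => ((S x)⁻¹ * Bi * S x) a b)
      (Set.Icc 0 T) 0 = Bseq T A Bi j 0 a b := by
    intro j
    have h0 : (0:ℝ) ∈ Set.Icc (0:ℝ) T := Set.left_mem_Icc.2 (le_of_lt hT)
    rw [iteratedDeriv_N hT hA hS0 hS Bi a b j 0 h0, hS0]
    rw [inv_one, Matrix.one_mul, Matrix.mul_one]
  have hsum : ∑ k ∈ Finset.range (2+1), (((k.factorial : ℝ))⁻¹ * (x - 0)^k)
      • iteratedDerivWithin k (fun x => ((S x)⁻¹ * Bi * S x) a b) (Set.Icc 0 T) 0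
      = Bi a b + x * (Bseq T A Bi 1 0) a b + x^2/2 * (Bseq T A Bi 2 0) a b := by
    rw [Finset.sum_range_succ, Finset.sum_range_succ, Finset.sum_range_one]
    rw [hiter 0, hiter 1, hiter 2]
    have hB0 : Bseq T A Bi 0 0 = Bi := rfl
    rw [hB0]
    simp only [smul_eq_mul, pow_zero, pow_one, Nat.factorial]
    push_cast
    ring
  rw [hsum] at h
  simpa [Real.norm_eq_abs] using h


lemma taylor_uniform (hT : 0 < T)
    (hA : ∀ a b, ContDiffOn ℝ (⊤ : ℕ∞) (fun t => A t a b) (Set.Icc 0 T))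
    (hS0 : S 0 = 1)
    (hS : ∀ t ∈ Set.Icc (0 : ℝ) T, ∀ a b,
      HasDerivWithinAt (fun r => S r a b) ((A t * S t) a b) (Set.Icc 0 T) t)
    {k : ℕ} (B : Fin k → Mat m) :
    ∃ K : ℝ, 0 ≤ K ∧ ∀ i : Fin k, ∀ x ∈ Set.Icc (0:ℝ) T,
      nrm ((S x)⁻¹ * B i * S x
        - (B i + x • Bseq T A (B i) 1 0 + (x^2/2) • Bseq T A (B i) 2 0)) ≤ K * x^3 := by
  have hch : ∀ p : Fin k × (Fin m ⊕ Fin m) × (Fin m ⊕ Fin m), ∃ K : ℝ,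
      ∀ x ∈ Set.Icc (0:ℝ) T,
      |((S x)⁻¹ * B p.1 * S x) p.2.1 p.2.2 - (B p.1 p.2.1 p.2.2
        + x * (Bseq T A (B p.1) 1 0) p.2.1 p.2.2
        + x^2/2 * (Bseq T A (B p.1) 2 0) p.2.1 p.2.2)| ≤ K * x^3 :=
    fun p => taylor_entry hT hA hS0 hS (B p.1) p.2.1 p.2.2
  choose Kf hKf using hch
  refine ⟨∑ p, |Kf p|, Finset.sum_nonneg fun _ _ => abs_nonneg _, ?_⟩
  intro i x hx
  have hx3 : (0:ℝ) ≤ x^3 := pow_nonneg hx.1 3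
  calc nrm ((S x)⁻¹ * B i * S x
        - (B i + x • Bseq T A (B i) 1 0 + (x^2/2) • Bseq T A (B i) 2 0))
      ≤ ∑ a, ∑ b, |Kf (i, a, b)| * x^3 := by
        refine Finset.sum_le_sum fun a _ => Finset.sum_le_sum fun b _ => ?_
        have hEntry : ((S x)⁻¹ * B i * S x
            - (B i + x • Bseq T A (B i) 1 0 + (x^2/2) • Bseq T A (B i) 2 0)) a b
            = ((S x)⁻¹ * B i * S x) a b - (B i a b
              + x * (Bseq T A (B i) 1 0) a b + x^2/2 * (Bseq T A (B i) 2 0) a b) := by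
          simp [Matrix.sub_apply, Matrix.add_apply, Matrix.smul_apply, smul_eq_mul]
        rw [hEntry]
        refine (hKf (i, a, b) x hx).trans ?_
        exact mul_le_mul_of_nonneg_right (le_abs_self _) hx3
    _ = (∑ a, ∑ b, |Kf (i, a, b)|) * x^3 := by simp only [← Finset.sum_mul]
    _ ≤ (∑ p, |Kf p|) * x^3 := by
        refine mul_le_mul_of_nonneg_right ?_ hx3
        have h1 : ∑ a, ∑ b, |Kf (i, a, b)|
            = ∑ q : (Fin m ⊕ Fin m) × (Fin m ⊕ Fin m), |Kf (i, q)| :=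
          (Fintype.sum_prod_type (f := fun q : (Fin m ⊕ Fin m) × (Fin m ⊕ Fin m) =>
            |Kf (i, q)|)).symm
        rw [h1, Fintype.sum_prod_type (f := fun p : Fin k × ((Fin m ⊕ Fin m) × (Fin m ⊕ Fin m)) => |Kf p|)]
        exact Finset.single_le_sum (f := fun i' => ∑ q : (Fin m ⊕ Fin m) × (Fin m ⊕ Fin m),
          |Kf (i', q)|) (fun _ _ => Finset.sum_nonneg fun _ _ => abs_nonneg _)
          (Finset.mem_univ i)

set_option maxHeartbeats 1000000 in
lemma key_pointwise (hT : 0 < T)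
    (hA : ∀ a b, ContDiffOn ℝ (⊤ : ℕ∞) (fun t => A t a b) (Set.Icc 0 T))
    (hS0 : S 0 = 1)
    (hS : ∀ t ∈ Set.Icc (0 : ℝ) T, ∀ a b,
      HasDerivWithinAt (fun r => S r a b) ((A t * S t) a b) (Set.Icc 0 T) t)
    {k : ℕ} (B : Fin k → Mat m) (hBB : ∀ i j, B i * B j = 0) (P : Mat m) :
    ∃ Kg : ℝ, 0 ≤ Kg ∧ ∀ (i j : Fin k) (t s : ℝ), 0 ≤ s → s ≤ t → t ≤ T →
      |Matrix.trace (Pᵀ * (S T * ((S t)⁻¹ * B i * S t * ((S s)⁻¹ * B j * S s))))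
        - Pcal T A S B P i j t s| ≤ Kg * t^3 := by
  obtain ⟨K, hK0, hK⟩ := taylor_uniform hT hA hS0 hS B
  have hT0 : (0:ℝ) ≤ T := le_of_lt hT
  set cB : ℝ := (∑ i, (nrm (B i) + nrm (Bseq T A (B i) 1 0) + nrm (Bseq T A (B i) 2 0))) + 1
    with hcBdef
  have hcB0 : 0 ≤ cB := by
    refine add_nonneg (Finset.sum_nonneg fun _ _ => ?_) zero_le_one
    exact add_nonneg (add_nonneg (nrm_nonneg _) (nrm_nonneg _)) (nrm_nonneg _)
  have hcB : ∀ i : Fin k, nrm (B i) ≤ cB ∧ nrm (Bseq T A (B i) 1 0) ≤ cB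
      ∧ nrm (Bseq T A (B i) 2 0) ≤ cB := by
    intro i
    have hsum : nrm (B i) + nrm (Bseq T A (B i) 1 0) + nrm (Bseq T A (B i) 2 0) ≤ cB := by
      rw [hcBdef]
      refine le_add_of_le_of_nonneg ?_ zero_le_one
      exact Finset.single_le_sum (f := fun i' => nrm (B i') + nrm (Bseq T A (B i') 1 0)
        + nrm (Bseq T A (B i') 2 0)) (fun i' _ => add_nonneg (add_nonneg (nrm_nonneg _)
          (nrm_nonneg _)) (nrm_nonneg _)) (Finset.mem_univ i)
    have n1 := nrm_nonneg (B i)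
    have n2 := nrm_nonneg (Bseq T A (B i) 1 0)
    have n3 := nrm_nonneg (Bseq T A (B i) 2 0)
    exact ⟨by linarith, by linarith, by linarith⟩
  set cP : ℝ := cB * (1 + T + T^2/2) with hcPdef
  have hcP0 : 0 ≤ cP := by
    rw [hcPdef]
    have : (0:ℝ) ≤ 1 + T + T^2/2 := by positivity
    exact mul_nonneg hcB0 this
  set Kr : ℝ := cB^2/2 + cB^2/2 + T*cB^2/4 + cP*K + K*cP + K*K*T^3 with hKrdef
  set W : Mat m := Pᵀ * S T with hWdef
  have hKr0 : 0 ≤ Kr := by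
    rw [hKrdef]
    have h1 : (0:ℝ) ≤ cB^2/2 := by positivity
    have h2 : (0:ℝ) ≤ T*cB^2/4 := by
      have : (0:ℝ) ≤ cB^2 := sq_nonneg _
      nlinarith
    have h3 : (0:ℝ) ≤ cP*K := mul_nonneg hcP0 hK0
    have h4 : (0:ℝ) ≤ K*cP := mul_nonneg hK0 hcP0
    have h5 : (0:ℝ) ≤ K*K*T^3 := mul_nonneg (mul_nonneg hK0 hK0) (pow_nonneg hT0 3)
    linarith
  refine ⟨nrm W * Kr, mul_nonneg (nrm_nonneg _) hKr0, ?_⟩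
  intro i j t s hs0 hst htT
  have ht0 : 0 ≤ t := hs0.trans hst
  have hsT : s ≤ T := hst.trans htT
  have htIcc : t ∈ Set.Icc (0:ℝ) T := ⟨ht0, htT⟩
  have hsIcc : s ∈ Set.Icc (0:ℝ) T := ⟨hs0, hsT⟩
  set Ci := Bseq T A (B i) 1 0 with hCi
  set Di := Bseq T A (B i) 2 0 with hDi
  set Cj := Bseq T A (B j) 1 0 with hCj
  set Dj := Bseq T A (B j) 2 0 with hDj
  set Q : Mat m := s • (B i * Cj) + t • (Ci * B j) + (s^2/2) • (B i * Dj)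
    + (t^2/2) • (Di * B j) + (t*s) • (Ci * Cj) with hQdef
  set Pit : Mat m := B i + t • Ci + (t^2/2) • Di with hPit
  set Pjs : Mat m := B j + s • Cj + (s^2/2) • Dj with hPjs
  set Eit : Mat m := (S t)⁻¹ * B i * S t - Pit with hEit
  set Ejs : Mat m := (S s)⁻¹ * B j * S s - Pjs with hEjs
  have hMi : (S t)⁻¹ * B i * S t = Pit + Eit := by rw [hEit]; abel
  have hMj : (S s)⁻¹ * B j * S s = Pjs + Ejs := by rw [hEjs]; abel
  have hEitB : nrm Eit ≤ K * t^3 := by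
    have := hK i t htIcc
    rw [hEit, hPit]
    exact this
  have hEjsB : nrm Ejs ≤ K * s^3 := by
    have := hK j s hsIcc
    rw [hEjs, hPjs]
    exact this
  have hPB : ∀ (x : ℝ) (hx0 : 0 ≤ x) (hxT : x ≤ T) (X C D : Mat m)
      (hX : nrm X ≤ cB) (hC : nrm C ≤ cB) (hD : nrm D ≤ cB),
      nrm (X + x • C + (x^2/2) • D) ≤ cP := by
    intro x hx0 hxT X C D hX hC hD
    calc nrm (X + x • C + (x^2/2) • D)
        ≤ nrm (X + x • C) + nrm ((x^2/2) • D) := nrm_add_le _ _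
      _ ≤ nrm X + nrm (x • C) + nrm ((x^2/2) • D) := add_le_add (nrm_add_le _ _) le_rfl
      _ = nrm X + |x| * nrm C + |x^2/2| * nrm D := by rw [nrm_smul, nrm_smul]
      _ ≤ cB + T * cB + T^2/2 * cB := by
          rw [abs_of_nonneg hx0, abs_of_nonneg (by positivity : (0:ℝ) ≤ x^2/2)]
          have hx2 : x^2/2 ≤ T^2/2 := by nlinarith
          refine add_le_add (add_le_add hX ?_) ?_
          · exact mul_le_mul hxT hC (nrm_nonneg _) hT0
          · exact mul_le_mul hx2 hD (nrm_nonneg _) (by positivity)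
      _ = cP := by rw [hcPdef]; ring
  have hPitB : nrm Pit ≤ cP :=
    hPB t ht0 htT (B i) Ci Di (hcB i).1 (hcB i).2.1 (hcB i).2.2
  have hPjsB : nrm Pjs ≤ cP :=
    hPB s hs0 hsT (B j) Cj Dj (hcB j).1 (hcB j).2.1 (hcB j).2.2
  -- the algebraic expansion
  have hexp : (S t)⁻¹ * B i * S t * ((S s)⁻¹ * B j * S s) - Q
      = (t*s^2/2) • (Ci * Dj) + (t^2*s/2) • (Di * Cj) + (t^2*s^2/4) • (Di * Dj)
        + Pit * Ejs + Eit * Pjs + Eit * Ejs := by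
    rw [hMi, hMj, hPit, hPjs, hQdef]
    simp only [add_mul, mul_add, smul_mul_assoc, mul_smul_comm, smul_smul, hBB i j, smul_zero]
    module
  -- rewrite the trace difference
  have hQP : Pcal T A S B P i j t s = Matrix.trace (Pᵀ * (S T * Q)) := by
    rw [hQdef, hCi, hDi, hCj, hDj]
    rfl
  have htrace : Matrix.trace (Pᵀ * (S T * ((S t)⁻¹ * B i * S t * ((S s)⁻¹ * B j * S s))))
      - Pcal T A S B P i j t s
      = Matrix.trace (W * ((S t)⁻¹ * B i * S t * ((S s)⁻¹ * B j * S s) - Q)) := by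
    have hassoc : ∀ X : Mat m, Pᵀ * (S T * X) = W * X := fun X => by
      rw [hWdef, Matrix.mul_assoc]
    rw [hQP, hassoc, hassoc, ← Matrix.trace_sub, ← Matrix.mul_sub]
  rw [htrace, hexp]
  refine (abs_trace_mul_le _ _).trans ?_
  rw [mul_assoc]
  refine mul_le_mul_of_nonneg_left ?_ (nrm_nonneg _)
  -- bound the six terms
  have e1 : nrm ((t*s^2/2) • (Ci * Dj)) ≤ cB^2/2 * t^3 := by
    rw [nrm_smul, abs_of_nonneg (by positivity : (0:ℝ) ≤ t*s^2/2)]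
    have hmul : nrm (Ci * Dj) ≤ cB * cB :=
      (nrm_mul_le _ _).trans (mul_le_mul (hcB i).2.1 (hcB j).2.2 (nrm_nonneg _) hcB0)
    have hco : t*s^2/2 ≤ t^3/2 := by
      have h2 : t * s^2 ≤ t * t^2 := mul_le_mul_of_nonneg_left (pow_le_pow_left₀ hs0 hst 2) ht0
      nlinarith [h2]
    calc t*s^2/2 * nrm (Ci*Dj) ≤ (t^3/2) * (cB*cB) :=
          mul_le_mul hco hmul (nrm_nonneg _) (by positivity)
      _ = cB^2/2 * t^3 := by ring
  have e2 : nrm ((t^2*s/2) • (Di * Cj)) ≤ cB^2/2 * t^3 := by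
    rw [nrm_smul, abs_of_nonneg (by positivity : (0:ℝ) ≤ t^2*s/2)]
    have hmul : nrm (Di * Cj) ≤ cB * cB :=
      (nrm_mul_le _ _).trans (mul_le_mul (hcB i).2.2 (hcB j).2.1 (nrm_nonneg _) hcB0)
    have hco : t^2*s/2 ≤ t^3/2 := by nlinarith
    calc t^2*s/2 * nrm (Di*Cj) ≤ (t^3/2) * (cB*cB) :=
          mul_le_mul hco hmul (nrm_nonneg _) (by positivity)
      _ = cB^2/2 * t^3 := by ring
  have e3 : nrm ((t^2*s^2/4) • (Di * Dj)) ≤ T*cB^2/4 * t^3 := by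
    rw [nrm_smul, abs_of_nonneg (by positivity : (0:ℝ) ≤ t^2*s^2/4)]
    have hmul : nrm (Di * Dj) ≤ cB * cB :=
      (nrm_mul_le _ _).trans (mul_le_mul (hcB i).2.2 (hcB j).2.2 (nrm_nonneg _) hcB0)
    have hco : t^2*s^2/4 ≤ T*t^3/4 := by
      have h2 : t^2*s^2 ≤ t^2*t^2 :=
        mul_le_mul_of_nonneg_left (pow_le_pow_left₀ hs0 hst 2) (pow_nonneg ht0 2)
      have h3 : t*t^3 ≤ T*t^3 := mul_le_mul_of_nonneg_right htT (pow_nonneg ht0 3)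
      nlinarith [h2, h3]
    calc t^2*s^2/4 * nrm (Di*Dj) ≤ (T*t^3/4) * (cB*cB) :=
          mul_le_mul hco hmul (nrm_nonneg _) (by positivity)
      _ = T*cB^2/4 * t^3 := by ring
  have e4 : nrm (Pit * Ejs) ≤ cP*K * t^3 := by
    have h := (nrm_mul_le Pit Ejs).trans
      (mul_le_mul hPitB hEjsB (nrm_nonneg _) hcP0)
    refine h.trans ?_
    have hs3 : s^3 ≤ t^3 := pow_le_pow_left₀ hs0 hst 3
    have : K * s^3 ≤ K * t^3 := mul_le_mul_of_nonneg_left hs3 hK0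
    calc cP * (K * s^3) ≤ cP * (K * t^3) := mul_le_mul_of_nonneg_left this hcP0
      _ = cP*K * t^3 := by ring
  have hKt3 : (0:ℝ) ≤ K * t^3 := mul_nonneg hK0 (pow_nonneg ht0 3)
  have e5 : nrm (Eit * Pjs) ≤ K*cP * t^3 := by
    have h := (nrm_mul_le Eit Pjs).trans
      (mul_le_mul hEitB hPjsB (nrm_nonneg _) hKt3)
    refine h.trans_eq ?_
    ring
  have e6 : nrm (Eit * Ejs) ≤ K*K*T^3 * t^3 := by
    have h := (nrm_mul_le Eit Ejs).trans
      (mul_le_mul hEitB hEjsB (nrm_nonneg _) hKt3)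
    refine h.trans ?_
    have hs3T : s^3 ≤ T^3 := pow_le_pow_left₀ hs0 hsT 3
    have h2 : K * s^3 ≤ K * T^3 := mul_le_mul_of_nonneg_left hs3T hK0
    calc (K * t^3) * (K * s^3) ≤ (K * t^3) * (K * T^3) :=
          mul_le_mul_of_nonneg_left h2 hKt3
      _ = K*K*T^3 * t^3 := by ring
  calc nrm ((t*s^2/2) • (Ci * Dj) + (t^2*s/2) • (Di * Cj) + (t^2*s^2/4) • (Di * Dj)
        + Pit * Ejs + Eit * Pjs + Eit * Ejs)
      ≤ nrm ((t*s^2/2) • (Ci * Dj)) + nrm ((t^2*s/2) • (Di * Cj))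
        + nrm ((t^2*s^2/4) • (Di * Dj)) + nrm (Pit * Ejs) + nrm (Eit * Pjs)
        + nrm (Eit * Ejs) := by
        refine (nrm_add_le _ _).trans (add_le_add ?_ le_rfl)
        refine (nrm_add_le _ _).trans (add_le_add ?_ le_rfl)
        refine (nrm_add_le _ _).trans (add_le_add ?_ le_rfl)
        refine (nrm_add_le _ _).trans (add_le_add ?_ le_rfl)
        exact nrm_add_le _ _
    _ ≤ cB^2/2 * t^3 + cB^2/2 * t^3 + T*cB^2/4 * t^3 + cP*K * t^3 + K*cP * t^3
        + K*K*T^3 * t^3 := by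
        exact add_le_add (add_le_add (add_le_add (add_le_add (add_le_add e1 e2) e3) e4) e5) e6
    _ = Kr * t^3 := by rw [hKrdef]; ring


lemma G_continuous (hT : 0 < T)
    (hA : ∀ a b, ContDiffOn ℝ (⊤ : ℕ∞) (fun t => A t a b) (Set.Icc 0 T))
    (hS0 : S 0 = 1)
    (hS : ∀ t ∈ Set.Icc (0 : ℝ) T, ∀ a b,
      HasDerivWithinAt (fun r => S r a b) ((A t * S t) a b) (Set.Icc 0 T) t)
    {k : ℕ} (B : Fin k → Mat m) (P : Mat m) (i j : Fin k) :
    ContinuousOn (fun z : ℝ × ℝ =>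
      Matrix.trace (Pᵀ * (S T * ((S z.1)⁻¹ * B i * S z.1 * ((S z.2)⁻¹ * B j * S z.2)))))
      (Set.Icc 0 T ×ˢ Set.Icc 0 T) := by
  have hM : ∀ (Bi : Mat m) a b, ContinuousOn (fun t => ((S t)⁻¹ * Bi * S t) a b)
      (Set.Icc 0 T) := by
    intro Bi a b
    have hexp : (fun t => ((S t)⁻¹ * Bi * S t) a b)
        = fun t => ∑ d, (∑ c, (S t)⁻¹ a c * Bi c d) * S t d b := by
      funext t
      rw [Matrix.mul_apply]
      exact Finset.sum_congr rfl fun d _ => by rw [Matrix.mul_apply]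
    rw [hexp]
    refine continuousOn_finset_sum _ fun d _ => ContinuousOn.mul ?_ ?_
    · refine continuousOn_finset_sum _ fun c _ => ContinuousOn.mul ?_ continuousOn_const
      exact contDiffOn_zero.mp (Sinv_contDiffOn hT hA hS0 hS 0 a c)
    · exact contDiffOn_zero.mp (S_contDiffOn hT hA hS 0 d b)
  have hexp2 : (fun z : ℝ × ℝ =>
      Matrix.trace (Pᵀ * (S T * ((S z.1)⁻¹ * B i * S z.1 * ((S z.2)⁻¹ * B j * S z.2)))))
      = fun z : ℝ × ℝ => ∑ a, ∑ b, (Pᵀ * S T) a b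
          * ∑ c, ((S z.1)⁻¹ * B i * S z.1) b c * ((S z.2)⁻¹ * B j * S z.2) c a := by
    funext z
    have hassoc : Pᵀ * (S T * ((S z.1)⁻¹ * B i * S z.1 * ((S z.2)⁻¹ * B j * S z.2)))
        = (Pᵀ * S T) * ((S z.1)⁻¹ * B i * S z.1 * ((S z.2)⁻¹ * B j * S z.2)) :=
      (Matrix.mul_assoc _ _ _).symm
    rw [hassoc]
    simp only [Matrix.trace, Matrix.diag]
    refine Finset.sum_congr rfl fun a _ => ?_
    rw [Matrix.mul_apply]
    exact Finset.sum_congr rfl fun b _ =>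
      congrArg (fun x => (Pᵀ * S T) a b * x) Matrix.mul_apply
  rw [hexp2]
  refine continuousOn_finset_sum _ fun a _ => continuousOn_finset_sum _ fun b _ => ?_
  refine ContinuousOn.mul continuousOn_const (continuousOn_finset_sum _ fun c _ => ?_)
  refine ContinuousOn.mul ?_ ?_
  · exact (hM (B i) b c).comp continuous_fst.continuousOn fun z hz => hz.1
  · exact (hM (B j) c a).comp continuous_snd.continuousOn fun z hz => hz.2

lemma Pcal_poly {k : ℕ} (B : Fin k → Mat m) (P : Mat m) (i j : Fin k) :
    ∀ t s : ℝ, Pcal T A S B P i j t s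
      = s * Matrix.trace (Pᵀ * (S T * (B i * Bseq T A (B j) 1 0)))
        + t * Matrix.trace (Pᵀ * (S T * (Bseq T A (B i) 1 0 * B j)))
        + s^2/2 * Matrix.trace (Pᵀ * (S T * (B i * Bseq T A (B j) 2 0)))
        + t^2/2 * Matrix.trace (Pᵀ * (S T * (Bseq T A (B i) 2 0 * B j)))
        + (t*s) * Matrix.trace (Pᵀ * (S T * (Bseq T A (B i) 1 0 * Bseq T A (B j) 1 0))) := by
  intro t s
  simp only [Pcal, mul_add, mul_smul_comm, Matrix.trace_add, Matrix.trace_smul, smul_eq_mul]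

lemma Pcal_continuous {k : ℕ} (B : Fin k → Mat m) (P : Mat m) (i j : Fin k) :
    Continuous (fun z : ℝ × ℝ => Pcal T A S B P i j z.1 z.2) := by
  simp only [Pcal_poly B P i j]
  fun_prop


set_option maxHeartbeats 1000000 in
lemma pair_bound (hT : 0 < T) {k : ℕ} (B : Fin k → Mat m) (P : Mat m) (i j : Fin k)
    (G : ℝ × ℝ → ℝ)
    (hgc : ContinuousOn G (Set.Icc 0 T ×ˢ Set.Icc 0 T))
    (Kg : ℝ) (hKg0 : 0 ≤ Kg)
    (hKg : ∀ t s : ℝ, 0 ≤ s → s ≤ t → t ≤ T →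
      |G (t, s) - Pcal T A S B P i j t s| ≤ Kg * t^3)
    (δ : ℝ) (hδ0 : 0 < δ) (hδT : δ < T)
    (u : ℝ → Fin k → ℝ)
    (hu : MemLp u 2 (volume.restrict (Set.Ioc 0 T)))
    (hu0 : ∀ᵐ t ∂(volume : Measure ℝ), t ∉ Set.Icc 0 δ → u t = 0) :
    |(∫ t in (0:ℝ)..T, ∫ s in (0:ℝ)..t, u t i * u s j * G (t, s))
      - ∫ t in (0:ℝ)..δ, ∫ s in (0:ℝ)..t, u t i * u s j * Pcal T A S B P i j t s|
    ≤ Kg * δ^3 * (δ * ((∫ t in Set.Ioc 0 δ, (u t i)^2)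
        + (∫ t in Set.Ioc 0 δ, (u t j)^2)) / 2) := by
  have hδsub : Set.Ioc (0:ℝ) δ ⊆ Set.Ioc 0 T := Set.Ioc_subset_Ioc_right hδT.le
  have hμle : volume.restrict (Set.Ioc (0:ℝ) δ) ≤ volume.restrict (Set.Ioc (0:ℝ) T) :=
    Measure.restrict_mono hδsub le_rfl
  haveI hfin : IsFiniteMeasure (volume.restrict (Set.Ioc (0:ℝ) δ)) := by
    constructor
    rw [Measure.restrict_apply_univ]
    exact measure_Ioc_lt_top
  -- componentwise integrability
  have hul : ∀ l : Fin k, MemLp (fun t => u t l) 2 (volume.restrict (Set.Ioc 0 T)) := by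
    intro l
    exact (ContinuousLinearMap.proj (R := ℝ) (φ := fun _ : Fin k => ℝ) l).comp_memLp' hu
  have hulδ : ∀ l : Fin k, MemLp (fun t => u t l) 2 (volume.restrict (Set.Ioc 0 δ)) :=
    fun l => (hul l).mono_measure hμle
  have hul2δ : ∀ l : Fin k, Integrable (fun t => (u t l)^2)
      (volume.restrict (Set.Ioc 0 δ)) := fun l => (hulδ l).integrable_sq
  have habs : ∀ l : Fin k, Integrable (fun t => |u t l|)
      (volume.restrict (Set.Ioc 0 δ)) := by
    intro l
    refine Integrable.mono' (((hul2δ l).add (integrable_const 1)).div_const 2) ?_ ?_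
    · have := (hulδ l).aestronglyMeasurable.norm
      simpa [Real.norm_eq_abs] using this
    · refine Filter.Eventually.of_forall fun t => ?_
      simp only [Pi.add_apply]
      rw [Real.norm_eq_abs, abs_abs]
      nlinarith [sq_nonneg (|u t l| - 1), sq_abs (u t l)]
  -- bounds for G and Pcal on the compact square
  obtain ⟨Cg, hCg⟩ := IsCompact.exists_bound_of_continuousOn
    (isCompact_Icc.prod (isCompact_Icc (a := (0:ℝ)) (b := T))) hgc
  obtain ⟨Cp, hCp⟩ := IsCompact.exists_bound_of_continuousOn
    (isCompact_Icc.prod (isCompact_Icc (a := (0:ℝ)) (b := T)))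
    (Pcal_continuous B P i j).continuousOn
  have hsubIcc : Set.Ioc (0:ℝ) δ ×ˢ Set.Ioc (0:ℝ) δ
      ⊆ Set.Icc (0:ℝ) T ×ˢ Set.Icc (0:ℝ) T := by
    refine Set.prod_mono ?_ ?_ <;>
      exact (Set.Ioc_subset_Icc_self).trans (Set.Icc_subset_Icc_right hδT.le)
  -- the triangular region
  set sSet : Set (ℝ × ℝ) := {w : ℝ × ℝ | w.2 ∈ Set.Ioc 0 w.1} with hsSet
  have hmeasset : MeasurableSet sSet := by
    have : sSet = {w : ℝ × ℝ | (0:ℝ) < w.2} ∩ {w : ℝ × ℝ | w.2 ≤ w.1} := by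
      ext w; simp [hsSet, Set.mem_Ioc, and_comm]
    rw [this]
    exact (measurableSet_lt measurable_const measurable_snd).inter
      (measurableSet_le measurable_snd measurable_fst)
  set H₁ : ℝ × ℝ → ℝ :=
    fun z => sSet.indicator (fun w => u w.1 i * u w.2 j * G w) z with hH₁
  set H₂ : ℝ × ℝ → ℝ :=
    fun z => sSet.indicator (fun w => u w.1 i * u w.2 j * Pcal T A S B P i j w.1 w.2) z
    with hH₂
  set ν : Measure (ℝ × ℝ) :=
    (volume.restrict (Set.Ioc (0:ℝ) δ)).prod (volume.restrict (Set.Ioc (0:ℝ) δ)) with hν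
  have hprodres : ν = ((volume : Measure ℝ).prod volume).restrict
      (Set.Ioc (0:ℝ) δ ×ˢ Set.Ioc (0:ℝ) δ) := Measure.prod_restrict _ _
  have hmem : ∀ᵐ z ∂ν, z ∈ Set.Ioc (0:ℝ) δ ×ˢ Set.Ioc (0:ℝ) δ := by
    rw [hprodres]
    exact ae_restrict_mem (measurableSet_Ioc.prod measurableSet_Ioc)
  -- measurability of H₁, H₂
  have hfstm : AEStronglyMeasurable (fun z : ℝ × ℝ => u z.1 i) ν :=
    (hulδ i).aestronglyMeasurable.comp_fst
  have hsndm : AEStronglyMeasurable (fun z : ℝ × ℝ => u z.2 j) ν :=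
    (hulδ j).aestronglyMeasurable.comp_snd
  have hGm : AEStronglyMeasurable G ν := by
    have h1 : AEStronglyMeasurable G
        (((volume : Measure ℝ).prod volume).restrict (Set.Icc 0 T ×ˢ Set.Icc 0 T)) :=
      hgc.aestronglyMeasurable (measurableSet_Icc.prod measurableSet_Icc)
    refine h1.mono_measure ?_
    rw [hprodres]
    exact Measure.restrict_mono hsubIcc le_rfl
  have hPm : AEStronglyMeasurable (fun z : ℝ × ℝ => Pcal T A S B P i j z.1 z.2) ν :=
    (Pcal_continuous B P i j).aestronglyMeasurable
  have hH₁m : AEStronglyMeasurable H₁ ν :=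
    ((hfstm.mul hsndm).mul hGm).indicator hmeasset
  have hH₂m : AEStronglyMeasurable H₂ ν :=
    ((hfstm.mul hsndm).mul hPm).indicator hmeasset
  -- integrability of H₁, H₂
  have hprodint : Integrable (fun z : ℝ × ℝ => |u z.1 i| * |u z.2 j|) ν :=
    (habs i).mul_prod (habs j)
  have hintH : ∀ (F : ℝ × ℝ → ℝ) (CF : ℝ),
      (∀ z ∈ Set.Icc (0:ℝ) T ×ˢ Set.Icc (0:ℝ) T, ‖F z‖ ≤ CF) →
      AEStronglyMeasurable (fun z => sSet.indicator
        (fun w => u w.1 i * u w.2 j * F w) z) ν →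
      Integrable (fun z => sSet.indicator (fun w => u w.1 i * u w.2 j * F w) z) ν := by
    intro F CF hCF hm
    refine Integrable.mono' (hprodint.const_mul (max CF 0)) hm ?_
    filter_upwards [hmem] with z hz
    by_cases hzin : z ∈ sSet
    · rw [Set.indicator_of_mem hzin]
      have hzIcc : z ∈ Set.Icc (0:ℝ) T ×ˢ Set.Icc (0:ℝ) T := hsubIcc hz
      calc ‖u z.1 i * u z.2 j * F z‖ = |u z.1 i| * |u z.2 j| * |F z| := by
            rw [Real.norm_eq_abs, abs_mul, abs_mul]
        _ ≤ |u z.1 i| * |u z.2 j| * max CF 0 := by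
            refine mul_le_mul_of_nonneg_left ?_
              (mul_nonneg (abs_nonneg _) (abs_nonneg _))
            exact le_max_of_le_left ((Real.norm_eq_abs (F z)) ▸ hCF z hzIcc)
        _ = max CF 0 * (|u z.1 i| * |u z.2 j|) := by ring
    · rw [Set.indicator_of_notMem hzin]
      simp only [norm_zero]
      positivity
  have hH₁int : Integrable H₁ ν := hintH G Cg hCg hH₁m
  have hH₂int : Integrable H₂ ν :=
    hintH (fun z => Pcal T A S B P i j z.1 z.2) Cp hCp hH₂m
  -- Step A : restrict the outer integral to [0, δ]
  have hstepA : (∫ t in (0:ℝ)..T, ∫ s in (0:ℝ)..t, u t i * u s j * G (t, s))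
      = ∫ t in (0:ℝ)..δ, ∫ s in (0:ℝ)..t, u t i * u s j * G (t, s) := by
    rw [intervalIntegral.integral_of_le hT.le, intervalIntegral.integral_of_le hδ0.le]
    have h1 : (∫ t in Set.Ioc (0:ℝ) T, ∫ s in (0:ℝ)..t, u t i * u s j * G (t, s))
        = ∫ t in Set.Ioc (0:ℝ) T, (Set.Ioc (0:ℝ) δ).indicator
            (fun t => ∫ s in (0:ℝ)..t, u t i * u s j * G (t, s)) t := by
      refine integral_congr_ae ?_
      filter_upwards [ae_restrict_of_ae hu0, ae_restrict_mem measurableSet_Ioc]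
        with t hut htmem
      by_cases htδ : t ≤ δ
      · exact (Set.indicator_of_mem (Set.mem_Ioc.mpr ⟨htmem.1, htδ⟩)
          (fun t => ∫ s in (0:ℝ)..t, u t i * u s j * G (t, s))).symm
      · have hz : u t = 0 := hut (fun hc => htδ hc.2)
        rw [Set.indicator_of_notMem (fun hc => htδ (hc : t ∈ Set.Ioc (0:ℝ) δ).2)]
        simp [hz]
    rw [h1, integral_indicator measurableSet_Ioc,
      Measure.restrict_restrict measurableSet_Ioc,
      Set.inter_eq_self_of_subset_left hδsub]
  -- Step B : rewrite the inner integrals via H₁, H₂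
  have hinner : ∀ (F : ℝ × ℝ → ℝ), ∀ t ∈ Set.Ioc (0:ℝ) δ,
      (∫ s in (0:ℝ)..t, u t i * u s j * F (t, s))
        = ∫ s in Set.Ioc (0:ℝ) δ, sSet.indicator
            (fun w => u w.1 i * u w.2 j * F w) (t, s) := by
    intro F t ht
    rw [intervalIntegral.integral_of_le ht.1.le]
    have heq : (fun s => sSet.indicator (fun w => u w.1 i * u w.2 j * F w) (t, s))
        = (Set.Ioc (0:ℝ) t).indicator (fun s => u t i * u s j * F (t, s)) := by
      funext s
      by_cases hs : s ∈ Set.Ioc (0:ℝ) t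
      · rw [Set.indicator_of_mem hs, Set.indicator_of_mem (by exact hs : (t, s) ∈ sSet)]
      · rw [Set.indicator_of_notMem hs,
          Set.indicator_of_notMem (by exact hs : (t, s) ∉ sSet)]
    rw [heq, integral_indicator measurableSet_Ioc,
      Measure.restrict_restrict measurableSet_Ioc,
      Set.inter_eq_self_of_subset_left (Set.Ioc_subset_Ioc_right ht.2)]
  have hI₁ : (∫ t in (0:ℝ)..δ, ∫ s in (0:ℝ)..t, u t i * u s j * G (t, s))
      = ∫ z, H₁ z ∂ν := by
    rw [intervalIntegral.integral_of_le hδ0.le]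
    rw [setIntegral_congr_fun measurableSet_Ioc
      (fun t ht => hinner G t ht)]
    exact integral_integral hH₁int
  have hI₂ : (∫ t in (0:ℝ)..δ, ∫ s in (0:ℝ)..t, u t i * u s j * Pcal T A S B P i j t s)
      = ∫ z, H₂ z ∂ν := by
    rw [intervalIntegral.integral_of_le hδ0.le]
    rw [setIntegral_congr_fun measurableSet_Ioc
      (fun t ht => hinner (fun z => Pcal T A S B P i j z.1 z.2) t ht)]
    exact integral_integral hH₂int
  -- the pointwise bound
  set bnd : ℝ × ℝ → ℝ :=
    fun z => Kg * δ^3 * ((u z.1 i)^2 + (u z.2 j)^2) / 2 with hbnd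
  have hsqfst : Integrable (fun z : ℝ × ℝ => (u z.1 i)^2) ν := by
    have := (hul2δ i).mul_prod (integrable_const (μ := volume.restrict (Set.Ioc (0:ℝ) δ)) (1:ℝ))
    simpa using this
  have hsqsnd : Integrable (fun z : ℝ × ℝ => (u z.2 j)^2) ν := by
    have := (integrable_const (μ := volume.restrict (Set.Ioc (0:ℝ) δ)) (1:ℝ)).mul_prod
      (hul2δ j)
    simpa using this
  have hbint : Integrable bnd ν := ((hsqfst.add hsqsnd).const_mul (Kg * δ^3)).div_const 2
  have hptw : ∀ᵐ z ∂ν, |H₁ z - H₂ z| ≤ bnd z := by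
    filter_upwards [hmem] with z hz
    have hKgδ : (0:ℝ) ≤ Kg * δ^3 := mul_nonneg hKg0 (pow_nonneg hδ0.le 3)
    by_cases hzin : z ∈ sSet
    · simp only [hH₁, hH₂]
      rw [Set.indicator_of_mem hzin, Set.indicator_of_mem hzin]
      have hdiff : u z.1 i * u z.2 j * G z
          - u z.1 i * u z.2 j * Pcal T A S B P i j z.1 z.2
          = u z.1 i * u z.2 j * (G z - Pcal T A S B P i j z.1 z.2) := by ring
      rw [hdiff, abs_mul, abs_mul]
      have hGz : |G z - Pcal T A S B P i j z.1 z.2| ≤ Kg * δ^3 := by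
        have hKgz := hKg z.1 z.2 hzin.1.le hzin.2 (hz.1.2.trans hδT.le)
        have : G (z.1, z.2) = G z := by rw [Prod.mk.eta]
        rw [this] at hKgz
        refine hKgz.trans ?_
        have : z.1^3 ≤ δ^3 := pow_le_pow_left₀ (hzin.1.le.trans hzin.2) hz.1.2 3
        exact mul_le_mul_of_nonneg_left this hKg0
      calc |u z.1 i| * |u z.2 j| * |G z - Pcal T A S B P i j z.1 z.2|
          ≤ |u z.1 i| * |u z.2 j| * (Kg * δ^3) :=
            mul_le_mul_of_nonneg_left hGz (mul_nonneg (abs_nonneg _) (abs_nonneg _))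
        _ ≤ ((u z.1 i)^2 + (u z.2 j)^2)/2 * (Kg * δ^3) := by
            refine mul_le_mul_of_nonneg_right ?_ hKgδ
            nlinarith [sq_nonneg (|u z.1 i| - |u z.2 j|), sq_abs (u z.1 i),
              sq_abs (u z.2 j), abs_nonneg (u z.1 i), abs_nonneg (u z.2 j)]
        _ = bnd z := by rw [hbnd]; ring
    · simp only [hH₁, hH₂]
      rw [Set.indicator_of_notMem hzin, Set.indicator_of_notMem hzin]
      simp only [sub_zero, abs_zero]
      rw [hbnd]
      positivity
  -- compute the integral of the bound
  have hμδuniv : ((volume.restrict (Set.Ioc (0:ℝ) δ)) Set.univ).toReal = δ := by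
    rw [Measure.restrict_apply_univ, Real.volume_Ioc]
    simp [hδ0.le]
  have hbndval : ∫ z, bnd z ∂ν
      = Kg * δ^3 * (δ * ((∫ t in Set.Ioc 0 δ, (u t i)^2)
        + (∫ t in Set.Ioc 0 δ, (u t j)^2)) / 2) := by
    rw [hbnd]
    simp only [mul_div_assoc]
    rw [integral_const_mul]
    rw [show (fun z : ℝ × ℝ => ((u z.1 i)^2 + (u z.2 j)^2) / 2)
      = fun z : ℝ × ℝ => ((u z.1 i)^2 + (u z.2 j)^2) * (1/2) from by funext z; ring]
    rw [integral_mul_const, integral_add hsqfst hsqsnd]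
    rw [integral_fun_fst (f := fun t => (u t i)^2), integral_fun_snd (f := fun t => (u t j)^2)]
    rw [show (volume.restrict (Set.Ioc (0:ℝ) δ)).real Set.univ = δ from hμδuniv, smul_eq_mul,
      smul_eq_mul]
    ring
  -- final assembly
  rw [hstepA, hI₁, hI₂, ← integral_sub hH₁int hH₂int]
  calc |∫ z, (H₁ z - H₂ z) ∂ν| ≤ ∫ z, |H₁ z - H₂ z| ∂ν := by
        simpa [Real.norm_eq_abs] using norm_integral_le_integral_norm (fun z => H₁ z - H₂ z) (μ := ν)
    _ ≤ ∫ z, bnd z ∂ν := integral_mono_ae (hH₁int.sub hH₂int).abs hbint hptw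
    _ = _ := hbndval

end Main


/-- **Lemma `LEM20sept2`**: assuming `B_iB_j = 0` for all `i,j`, there is `C > 0` such that
for every `δ ∈ (0,T)` and every `u ∈ L²([0,T];ℝᵏ)` supported (a.e.) in `[0,δ]`,
`|P · D²₀E^{I,T}(u) − Q_δ(u)| ≤ C δ⁴ ‖u‖²_{L²}`. -/
theorem quadratic_approximation {m k : ℕ} (T : ℝ) (hT : 0 < T)
    (A : ℝ → Mat m) (B : Fin k → Mat m)
    (hA : ∀ a b, ContDiffOn ℝ (⊤ : ℕ∞) (fun t => A t a b) (Set.Icc 0 T))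
    (hBB : ∀ i j, B i * B j = 0)
    (S : ℝ → Mat m) (hS0 : S 0 = 1)
    (hS : ∀ t ∈ Set.Icc (0 : ℝ) T, ∀ a b,
      HasDerivWithinAt (fun r => S r a b) ((A t * S t) a b) (Set.Icc 0 T) t)
    (P : Mat m) :
    ∃ C > (0 : ℝ), ∀ δ : ℝ, 0 < δ → δ < T →
      ∀ u : ℝ → Fin k → ℝ,
        MemLp u 2 (volume.restrict (Set.Ioc 0 T)) →
        (∀ᵐ t ∂(volume : Measure ℝ), t ∉ Set.Icc 0 δ → u t = 0) →
        |Phi T S B P u - Qdelta T A S B P δ u| ≤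
          C * δ ^ 4 * ∫ t in (0 : ℝ)..T, ∑ i, (u t i) ^ 2 := by
  obtain ⟨Kg, hKg0, hKg⟩ := key_pointwise hT hA hS0 hS B hBB P
  have hk0 : (0:ℝ) ≤ (k:ℝ) := Nat.cast_nonneg k
  refine ⟨2*(k:ℝ)*Kg + 1, by positivity, ?_⟩
  intro δ hδ0 hδT u hu hu0
  have hul : ∀ l : Fin k, MemLp (fun t => u t l) 2 (volume.restrict (Set.Ioc 0 T)) :=
    fun l => (ContinuousLinearMap.proj (R := ℝ) (φ := fun _ : Fin k => ℝ) l).comp_memLp' hu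
  have hul2 : ∀ l : Fin k, Integrable (fun t => (u t l)^2) (volume.restrict (Set.Ioc 0 T)) :=
    fun l => (hul l).integrable_sq
  set X : ℝ := ∫ t in (0 : ℝ)..T, ∑ i, (u t i) ^ 2 with hX
  set a : Fin k → ℝ := fun l => ∫ t in Set.Ioc (0:ℝ) δ, (u t l)^2 with ha
  have ha0 : ∀ l, 0 ≤ a l := fun l =>
    setIntegral_nonneg measurableSet_Ioc fun t _ => sq_nonneg _
  have hble : ∀ l, a l ≤ ∫ t in Set.Ioc (0:ℝ) T, (u t l)^2 := by
    intro l
    refine setIntegral_mono_set (hul2 l) ?_ ?_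
    · exact Filter.Eventually.of_forall fun t => sq_nonneg _
    · exact HasSubset.Subset.eventuallyLE (Set.Ioc_subset_Ioc_right hδT.le)
  have hXeq : X = ∑ l, ∫ t in Set.Ioc (0:ℝ) T, (u t l)^2 := by
    rw [hX, intervalIntegral.integral_of_le hT.le]
    exact integral_finset_sum Finset.univ (fun l _ => hul2 l)
  have hX0 : 0 ≤ X := by
    rw [hXeq]
    exact Finset.sum_nonneg fun l _ =>
      setIntegral_nonneg measurableSet_Ioc fun t _ => sq_nonneg _
  have hsa : ∑ l, a l ≤ X := by
    rw [hXeq]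
    exact Finset.sum_le_sum fun l _ => hble l
  have hpair : ∀ i j : Fin k,
      |(∫ t in (0:ℝ)..T, ∫ s in (0:ℝ)..t, u t i * u s j *
          Matrix.trace (Pᵀ * (S T * ((S t)⁻¹ * B i * S t * ((S s)⁻¹ * B j * S s)))))
        - ∫ t in (0:ℝ)..δ, ∫ s in (0:ℝ)..t, u t i * u s j * Pcal T A S B P i j t s|
      ≤ Kg * δ^3 * (δ * (a i + a j)/2) := by
    intro i j
    exact pair_bound hT B P i j
      (fun z : ℝ × ℝ => Matrix.trace
        (Pᵀ * (S T * ((S z.1)⁻¹ * B i * S z.1 * ((S z.2)⁻¹ * B j * S z.2)))))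
      (G_continuous hT hA hS0 hS B P i j) Kg hKg0
      (fun t s h1 h2 h3 => hKg i j t s h1 h2 h3) δ hδ0 hδT u hu hu0
  have hPhiQ : Phi T S B P u - Qdelta T A S B P δ u
      = 2 * ∑ i, ∑ j,
        ((∫ t in (0:ℝ)..T, ∫ s in (0:ℝ)..t, u t i * u s j *
            Matrix.trace (Pᵀ * (S T * ((S t)⁻¹ * B i * S t * ((S s)⁻¹ * B j * S s)))))
          - ∫ t in (0:ℝ)..δ, ∫ s in (0:ℝ)..t, u t i * u s j * Pcal T A S B P i j t s) := by
    rw [Phi, Qdelta, ← mul_sub, ← Finset.sum_sub_distrib]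
    congr 1
    exact Finset.sum_congr rfl fun i _ => (Finset.sum_sub_distrib _ _).symm
  rw [hPhiQ]
  have habs2 : |2 * ∑ i, ∑ j,
        ((∫ t in (0:ℝ)..T, ∫ s in (0:ℝ)..t, u t i * u s j *
            Matrix.trace (Pᵀ * (S T * ((S t)⁻¹ * B i * S t * ((S s)⁻¹ * B j * S s)))))
          - ∫ t in (0:ℝ)..δ, ∫ s in (0:ℝ)..t, u t i * u s j * Pcal T A S B P i j t s)|
      ≤ 2 * ∑ i, ∑ j, (Kg * δ^3 * (δ * (a i + a j)/2)) := by
    rw [abs_mul, abs_of_nonneg (by norm_num : (0:ℝ) ≤ 2)]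
    refine mul_le_mul_of_nonneg_left ?_ (by norm_num)
    refine (Finset.abs_sum_le_sum_abs _ _).trans ?_
    refine Finset.sum_le_sum fun i _ => ?_
    refine (Finset.abs_sum_le_sum_abs _ _).trans ?_
    exact Finset.sum_le_sum fun j _ => hpair i j
  refine habs2.trans ?_
  have hcollect : (2:ℝ) * ∑ i, ∑ j, (Kg * δ^3 * (δ * (a i + a j)/2))
      = 2*(k:ℝ)*Kg * δ^4 * (∑ l, a l) := by
    have hterm : ∀ i j : Fin k, Kg * δ^3 * (δ * (a i + a j)/2)
        = (Kg * δ^4/2) * (a i + a j) := fun i j => by ring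
    simp only [hterm]
    simp only [← Finset.mul_sum]
    have hdouble : ∑ i : Fin k, ∑ j : Fin k, (a i + a j) = 2*(k:ℝ)*(∑ l, a l) := by
      have h1 : ∀ i : Fin k, ∑ j : Fin k, (a i + a j) = (k:ℝ) * a i + ∑ l, a l := by
        intro i
        rw [Finset.sum_add_distrib, Finset.sum_const, Finset.card_univ, Fintype.card_fin,
          nsmul_eq_mul]
      simp only [h1]
      rw [Finset.sum_add_distrib, ← Finset.mul_sum, Finset.sum_const, Finset.card_univ,
        Fintype.card_fin, nsmul_eq_mul]
      ring
    rw [hdouble]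
    ring
  rw [hcollect]
  have h1 : 2*(k:ℝ)*Kg * δ^4 * (∑ l, a l) ≤ 2*(k:ℝ)*Kg * δ^4 * X := by
    refine mul_le_mul_of_nonneg_left hsa ?_
    have : (0:ℝ) ≤ 2*(k:ℝ)*Kg := by positivity
    exact mul_nonneg this (pow_nonneg hδ0.le 4)
  refine h1.trans ?_
  have h2 : 2*(k:ℝ)*Kg * δ^4 ≤ (2*(k:ℝ)*Kg + 1) * δ^4 := by
    refine mul_le_mul_of_nonneg_right (by linarith) (pow_nonneg hδ0.le 4)
  exact mul_le_mul_of_nonneg_right h2 hX0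


end Stmt7
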